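/- For every positive integer n there exists a set S of permutations of [n] = {1,…,n} such that any two distinct permutations in S are locally disjoint and 5^n · |S| ≥ n!. -/

import Mathlib

/-- Two permutations `σ` and `τ` of `[n]` are *locally disjoint* if there exist
distinct elements `a, b` with `σ⁻¹(a) < σ⁻¹(b) < τ⁻¹(a) < τ⁻¹(b)` or
`τ⁻¹(a) < τ⁻¹(b) < σ⁻¹(a) < σ⁻¹(b)`. -/
def LocallyDisjoint {n : ℕ} (σ τ : Equiv.Perm (Fin n)) : Prop :=
  ∃ a b : Fin n, a ≠ b ∧
    ((σ⁻¹ a < σ⁻¹ b ∧ σ⁻¹ b < τ⁻¹ a ∧ τ⁻¹ a < τ⁻¹ b) ∨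
     (τ⁻¹ a < τ⁻¹ b ∧ τ⁻¹ b < σ⁻¹ a ∧ σ⁻¹ a < σ⁻¹ b))

theorem Equiv.Perm.apply_inv_self {α : Type*} (f : Equiv.Perm α) (x : α) : f (f⁻¹ x) = x :=
  Equiv.apply_symm_apply f x

theorem Equiv.Perm.inv_apply_self {α : Type*} (f : Equiv.Perm α) (x : α) : f⁻¹ (f x) = x :=
  Equiv.symm_apply_apply f x

namespace LDAux

variable {n : ℕ}

/-- Key lemma: for pattern-avoiding permutations with the same "type data",
the partner of a rightward close cannot differ. -/
lemma not_lt_partner (ρ ρ' : Equiv.Perm (Fin n))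
    (hR : ∀ i j : Fin n, ¬(i < j ∧ j < ρ i ∧ ρ i < ρ j))
    (hR' : ∀ i j : Fin n, ¬(i < j ∧ j < ρ' i ∧ ρ' i < ρ' j))
    (ht1 : ∀ t : Fin n, t < ρ t ↔ t < ρ' t)
    (ht2 : ∀ t : Fin n, ρ⁻¹ t < t ↔ ρ'⁻¹ t < t)
    (c : Fin n) (hc : ρ⁻¹ c < c) : ¬ (ρ⁻¹ c < ρ'⁻¹ c) := by
  intro hlt
  set o := ρ⁻¹ c with ho
  set o' := ρ'⁻¹ c with ho'
  have hro : ρ o = c := Equiv.Perm.apply_inv_self ρ c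
  have hro' : ρ' o' = c := Equiv.Perm.apply_inv_self ρ' c
  have ho'c : o' < c := (ht2 c).mp hc
  set A : Finset (Fin n) := (Finset.Ioo o' c).filter (fun i => i < ρ i) with hA
  set B : Finset (Fin n) := (Finset.Ioo o' c).filter (fun v => ρ⁻¹ v < v) with hB
  set A' : Finset (Fin n) := (Finset.Ioo o' c).filter (fun i => i < ρ' i) with hA'
  set B' : Finset (Fin n) := (Finset.Ioo o' c).filter (fun v => ρ'⁻¹ v < v) with hB'
  have hAA : A = A' := Finset.filter_congr (fun t _ => by simpa using ht1 t)
  have hBB : B = B' := Finset.filter_congr (fun t _ => by simpa using ht2 t)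
  -- |A'| = |B'| via the bijection i ↦ ρ' i
  have hcard1 : A'.card = B'.card := by
    apply Finset.card_bij (fun a _ => ρ' a)
    · intro a ha
      rw [hA', Finset.mem_filter, Finset.mem_Ioo] at ha
      obtain ⟨⟨h1, h2⟩, h3⟩ := ha
      have hne : ρ' a ≠ c := by
        rw [← hro']; exact fun h => absurd (ρ'.injective h) (ne_of_gt h1)
      have hlt2 : ρ' a < c := by
        by_contra hge
        have : c < ρ' a := lt_of_le_of_ne (not_lt.mp hge) (Ne.symm hne)
        exact hR' o' a ⟨h1, by rw [hro']; exact h2, by rw [hro']; exact this⟩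
      rw [hB', Finset.mem_filter, Finset.mem_Ioo]
      exact ⟨⟨lt_trans h1 h3, hlt2⟩, by rw [Equiv.Perm.inv_apply_self]; exact h3⟩
    · intro a₁ _ a₂ _ h; exact ρ'.injective h
    · intro v hv
      rw [hB', Finset.mem_filter, Finset.mem_Ioo] at hv
      obtain ⟨⟨h1, h2⟩, h3⟩ := hv
      refine ⟨ρ'⁻¹ v, ?_, Equiv.Perm.apply_inv_self ρ' v⟩
      rw [hA', Finset.mem_filter, Finset.mem_Ioo]
      have hne : ρ'⁻¹ v ≠ o' := fun h => absurd
        (show v = c by rw [← hro', ← h, Equiv.Perm.apply_inv_self]) (ne_of_lt h2)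
      have hgt : o' < ρ'⁻¹ v := by
        by_contra hle
        have hlt3 : ρ'⁻¹ v < o' := lt_of_le_of_ne (not_lt.mp hle) hne
        exact hR' (ρ'⁻¹ v) o' ⟨hlt3, by rw [Equiv.Perm.apply_inv_self]; exact h1,
          by rw [Equiv.Perm.apply_inv_self, hro']; exact h2⟩
      refine ⟨⟨hgt, lt_trans h3 h2⟩, by rw [Equiv.Perm.apply_inv_self]; exact h3⟩
  -- |A| < |B|
  have hoo' : o < o' := hlt
  have hcard2 : A.card < B.card := by
    have hρo' : ρ o' ∈ B := by
      have h1 : o' < ρ o' := (ht1 o').mpr (by rw [hro']; exact ho'c)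
      have hne : ρ o' ≠ c := by
        rw [← hro]; exact fun h => absurd (ρ.injective h) (ne_of_gt hoo')
      have h2 : ρ o' < c := by
        by_contra hge
        have : c < ρ o' := lt_of_le_of_ne (not_lt.mp hge) (Ne.symm hne)
        exact hR o o' ⟨hoo', by rw [hro]; exact ho'c, by rw [hro]; exact this⟩
      rw [hB, Finset.mem_filter, Finset.mem_Ioo]
      exact ⟨⟨h1, h2⟩, by rw [Equiv.Perm.inv_apply_self]; exact h1⟩
    have himg : A.image ρ ⊆ B.erase (ρ o') := by
      intro v hv
      rw [Finset.mem_image] at hv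
      obtain ⟨a, ha, rfl⟩ := hv
      rw [hA, Finset.mem_filter, Finset.mem_Ioo] at ha
      obtain ⟨⟨h1, h2⟩, h3⟩ := ha
      have hne : ρ a ≠ c := by
        rw [← hro]; exact fun h => absurd (ρ.injective h) (ne_of_gt (lt_trans hoo' h1))
      have hlt2 : ρ a < c := by
        by_contra hge
        have : c < ρ a := lt_of_le_of_ne (not_lt.mp hge) (Ne.symm hne)
        exact hR o a ⟨lt_trans hoo' h1, by rw [hro]; exact h2, by rw [hro]; exact this⟩
      rw [Finset.mem_erase]
      refine ⟨fun h => absurd (ρ.injective h) (ne_of_gt h1), ?_⟩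
      rw [hB, Finset.mem_filter, Finset.mem_Ioo]
      exact ⟨⟨lt_trans h1 h3, hlt2⟩, by rw [Equiv.Perm.inv_apply_self]; exact h3⟩
    calc A.card = (A.image ρ).card := (Finset.card_image_of_injective A ρ.injective).symm
      _ ≤ (B.erase (ρ o')).card := Finset.card_le_card himg
      _ < B.card := Finset.card_erase_lt_of_mem hρo'
  rw [hAA, hBB, hcard1] at hcard2
  exact lt_irrefl _ hcard2
variable {n : ℕ}

lemma lt_rev_iff (a b : Fin n) : a < b.rev ↔ b < a.rev := by
  rw [← Fin.rev_rev a, Fin.rev_lt_rev, Fin.rev_rev]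

lemma rev_lt_iff (a b : Fin n) : a.rev < b ↔ b.rev < a := by
  rw [← Fin.rev_rev b, Fin.rev_lt_rev, Fin.rev_rev]

lemma revPerm_inv : (Fin.revPerm : Equiv.Perm (Fin n))⁻¹ = Fin.revPerm := by
  ext x
  simp [Equiv.Perm.inv_def]

lemma conj_apply (ρ : Equiv.Perm (Fin n)) (x : Fin n) :
    (Fin.revPerm * ρ * Fin.revPerm : Equiv.Perm (Fin n)) x = (ρ x.rev).rev := by
  simp [Equiv.Perm.mul_apply]

lemma conj_inv_apply (ρ : Equiv.Perm (Fin n)) (x : Fin n) :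
    (Fin.revPerm * ρ * Fin.revPerm : Equiv.Perm (Fin n))⁻¹ x = (ρ⁻¹ x.rev).rev := by
  rw [mul_inv_rev, mul_inv_rev, revPerm_inv]
  simp [Equiv.Perm.mul_apply]

lemma conj_hR (ρ : Equiv.Perm (Fin n))
    (hL : ∀ i j : Fin n, ¬(ρ i < ρ j ∧ ρ j < i ∧ i < j)) :
    ∀ i j : Fin n, ¬(i < j ∧ j < (Fin.revPerm * ρ * Fin.revPerm : Equiv.Perm (Fin n)) i ∧
      (Fin.revPerm * ρ * Fin.revPerm : Equiv.Perm (Fin n)) i < (Fin.revPerm * ρ * Fin.revPerm : Equiv.Perm (Fin n)) j) := by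
  intro i j ⟨hij, h2, h3⟩
  rw [conj_apply] at h2
  rw [conj_apply, conj_apply, Fin.rev_lt_rev] at h3
  rw [lt_rev_iff] at h2
  exact hL j.rev i.rev ⟨h3, h2, Fin.rev_lt_rev.mpr hij⟩

lemma not_lt_partner' (ρ ρ' : Equiv.Perm (Fin n))
    (hL : ∀ i j : Fin n, ¬(ρ i < ρ j ∧ ρ j < i ∧ i < j))
    (hL' : ∀ i j : Fin n, ¬(ρ' i < ρ' j ∧ ρ' j < i ∧ i < j))
    (ht1 : ∀ t : Fin n, ρ t < t ↔ ρ' t < t)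
    (ht2 : ∀ t : Fin n, t < ρ⁻¹ t ↔ t < ρ'⁻¹ t)
    (c : Fin n) (hc : c < ρ⁻¹ c) : ¬ (ρ'⁻¹ c < ρ⁻¹ c) := by
  have key := not_lt_partner (Fin.revPerm * ρ * Fin.revPerm : Equiv.Perm (Fin n))
    (Fin.revPerm * ρ' * Fin.revPerm : Equiv.Perm (Fin n))
    (conj_hR ρ hL) (conj_hR ρ' hL')
    (fun t => by
      rw [conj_apply, conj_apply]
      exact (lt_rev_iff t (ρ t.rev)).trans ((ht1 t.rev).trans (lt_rev_iff t (ρ' t.rev)).symm))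
    (fun t => by
      rw [conj_inv_apply, conj_inv_apply]
      exact (rev_lt_iff (ρ⁻¹ t.rev) t).trans ((ht2 t.rev).trans (rev_lt_iff (ρ'⁻¹ t.rev) t).symm))
    c.rev
    (by rw [conj_inv_apply, Fin.rev_rev, Fin.rev_lt_rev]; exact hc)
  rw [conj_inv_apply, conj_inv_apply, Fin.rev_rev, Fin.rev_lt_rev] at key
  exact key


lemma eq_of_typeData (ρ ρ' : Equiv.Perm (Fin n))
    (hRa : ∀ i j : Fin n, ¬(i < j ∧ j < ρ i ∧ ρ i < ρ j))
    (hLa : ∀ i j : Fin n, ¬(ρ i < ρ j ∧ ρ j < i ∧ i < j))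
    (hRb : ∀ i j : Fin n, ¬(i < j ∧ j < ρ' i ∧ ρ' i < ρ' j))
    (hLb : ∀ i j : Fin n, ¬(ρ' i < ρ' j ∧ ρ' j < i ∧ i < j))
    (h1 : ∀ t : Fin n, ρ t < t ↔ ρ' t < t)
    (h2 : ∀ t : Fin n, t < ρ t ↔ t < ρ' t)
    (h3 : ∀ t : Fin n, ρ⁻¹ t < t ↔ ρ'⁻¹ t < t)
    (h4 : ∀ t : Fin n, t < ρ⁻¹ t ↔ t < ρ'⁻¹ t) : ρ = ρ' := by
  have hinv : ∀ c, ρ⁻¹ c = ρ'⁻¹ c := by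
    intro c
    rcases lt_trichotomy (ρ⁻¹ c) c with hc | hc | hc
    · have k1 := not_lt_partner ρ ρ' hRa hRb h2 h3 c hc
      have k2 := not_lt_partner ρ' ρ hRb hRa (fun t => (h2 t).symm) (fun t => (h3 t).symm)
        c ((h3 c).mp hc)
      exact le_antisymm (not_lt.mp k2) (not_lt.mp k1)
    · have n1 : ¬(ρ'⁻¹ c < c) := fun h => absurd ((h3 c).mpr h) (by rw [hc]; exact lt_irrefl c)
      have n2 : ¬(c < ρ'⁻¹ c) := fun h => absurd ((h4 c).mpr h) (by rw [hc]; exact lt_irrefl c)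
      rw [hc, (le_antisymm (not_lt.mp n1) (not_lt.mp n2)).symm]
    · have k1 := not_lt_partner' ρ ρ' hLa hLb h1 h4 c hc
      have k2 := not_lt_partner' ρ' ρ hLb hLa (fun t => (h1 t).symm) (fun t => (h4 t).symm)
        c ((h4 c).mp hc)
      exact le_antisymm (not_lt.mp k1) (not_lt.mp k2)
  exact inv_injective (Equiv.ext hinv)

lemma avoid_R {ρ : Equiv.Perm (Fin n)} (h : ¬ LocallyDisjoint 1 ρ) :
    ∀ i j : Fin n, ¬(i < j ∧ j < ρ i ∧ ρ i < ρ j) := by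
  rintro i j ⟨h1, h2, h3⟩
  exact h ⟨ρ i, ρ j, fun he => absurd (ρ.injective he) (ne_of_lt h1),
    Or.inr (by simpa using ⟨h1, h2, h3⟩)⟩

lemma avoid_L {ρ : Equiv.Perm (Fin n)} (h : ¬ LocallyDisjoint 1 ρ) :
    ∀ i j : Fin n, ¬(ρ i < ρ j ∧ ρ j < i ∧ i < j) := by
  rintro i j ⟨h1, h2, h3⟩
  exact h ⟨ρ i, ρ j, fun he => absurd (ρ.injective he) (ne_of_lt h3),
    Or.inl (by simpa using ⟨h1, h2, h3⟩)⟩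


def TGood (x : (Bool × Bool) × Bool × Bool) : Prop :=
  (x.1.1 = false ∨ x.1.2 = false) ∧ (x.2.1 = false ∨ x.2.2 = false) ∧
  ((x.1.1 = false ∧ x.1.2 = false) ↔ (x.2.1 = false ∧ x.2.2 = false))

instance : DecidablePred TGood := fun x => by unfold TGood; infer_instance

lemma card_TGood : Fintype.card {x // TGood x} = 5 := by decide

def F (ρ : Equiv.Perm (Fin n)) (t : Fin n) : {x // TGood x} :=
  ⟨((decide (ρ t < t), decide (t < ρ t)), (decide (ρ⁻¹ t < t), decide (t < ρ⁻¹ t))), by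
    constructor
    · rcases lt_trichotomy (ρ t) t with h | h | h
      · right; simpa using not_lt_of_gt h
      · left; simp [h]
      · left; simpa using not_lt_of_gt h
    constructor
    · rcases lt_trichotomy (ρ⁻¹ t) t with h | h | h
      · right; simpa using not_lt_of_gt h
      · left; simp [h]
      · left; simpa using not_lt_of_gt h
    · simp only [decide_eq_false_iff_not, not_lt, ← le_antisymm_iff]
      constructor
      · intro h; exact ((congrArg (⇑ρ⁻¹) h).trans (ρ.inv_apply_self t)).symm
      · intro h; exact ((congrArg (⇑ρ) h).trans (ρ.apply_inv_self t)).symm⟩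

lemma F_inj {ρ ρ' : Equiv.Perm (Fin n)} (hρ : ¬ LocallyDisjoint 1 ρ)
    (hρ' : ¬ LocallyDisjoint 1 ρ') (h : F ρ = F ρ') : ρ = ρ' := by
  have key : ∀ t : Fin n,
      (decide (ρ t < t) = decide (ρ' t < t)) ∧ (decide (t < ρ t) = decide (t < ρ' t)) ∧
      (decide (ρ⁻¹ t < t) = decide (ρ'⁻¹ t < t)) ∧ (decide (t < ρ⁻¹ t) = decide (t < ρ'⁻¹ t)) := by
    intro t
    have := congrFun h t
    rw [Subtype.ext_iff] at this
    simp only [Prod.ext_iff] at this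
    exact ⟨this.1.1, this.1.2, this.2.1, this.2.2⟩
  exact eq_of_typeData ρ ρ' (avoid_R hρ) (avoid_L hρ) (avoid_R hρ') (avoid_L hρ')
    (fun t => decide_eq_decide.mp (key t).1)
    (fun t => decide_eq_decide.mp (key t).2.1)
    (fun t => decide_eq_decide.mp (key t).2.2.1)
    (fun t => decide_eq_decide.mp (key t).2.2.2)

instance (σ τ : Equiv.Perm (Fin n)) : Decidable (LocallyDisjoint σ τ) := by
  unfold LocallyDisjoint; infer_instance

lemma card_nonLD :
    (Finset.univ.filter (fun ρ : Equiv.Perm (Fin n) => ¬ LocallyDisjoint 1 ρ)).card ≤ 5 ^ n := by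
  have step : (Finset.univ.filter (fun ρ : Equiv.Perm (Fin n) => ¬ LocallyDisjoint 1 ρ)).card
      ≤ (Finset.univ : Finset (Fin n → {x // TGood x})).card := by
    apply Finset.card_le_card_of_injOn F (fun _ _ => Finset.mem_univ _)
    intro ρ hρ ρ' hρ' hF
    rw [Finset.coe_filter, Set.mem_setOf_eq] at hρ hρ'
    exact F_inj hρ.2 hρ'.2 hF
  calc _ ≤ _ := step
    _ = 5 ^ n := by rw [Finset.card_univ, Fintype.card_fun, card_TGood, Fintype.card_fin]


lemma LD_symm {σ τ : Equiv.Perm (Fin n)} (h : LocallyDisjoint σ τ) : LocallyDisjoint τ σ := by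
  obtain ⟨a, b, hab, h⟩ := h
  exact ⟨a, b, hab, h.symm⟩

lemma LD_irrefl (σ : Equiv.Perm (Fin n)) : ¬ LocallyDisjoint σ σ := by
  rintro ⟨a, b, hab, (⟨h1, h2, h3⟩ | ⟨h1, h2, h3⟩)⟩ <;> exact lt_asymm h1 h2

lemma LD_mul (π σ τ : Equiv.Perm (Fin n)) :
    LocallyDisjoint (π * σ) (π * τ) ↔ LocallyDisjoint σ τ := by
  constructor
  · rintro ⟨a, b, hab, h⟩
    refine ⟨π⁻¹ a, π⁻¹ b, fun he => hab (Equiv.injective _ he), ?_⟩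
    simpa [mul_inv_rev, Equiv.Perm.mul_apply] using h
  · rintro ⟨a, b, hab, h⟩
    refine ⟨π a, π b, fun he => hab (π.injective he), ?_⟩
    simpa [mul_inv_rev, Equiv.Perm.mul_apply, Equiv.Perm.inv_apply_self] using h

lemma card_nbhd (σ : Equiv.Perm (Fin n)) (V : Finset (Equiv.Perm (Fin n))) :
    (V.filter (fun τ => ¬ LocallyDisjoint σ τ)).card ≤ 5 ^ n := by
  refine le_trans (Finset.card_le_card_of_injOn (fun τ => σ⁻¹ * τ) ?_ ?_) card_nonLD
  · intro τ hτ
    rw [Finset.mem_coe, Finset.mem_filter] at hτ ⊢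
    refine ⟨Finset.mem_univ _, fun h => hτ.2 ?_⟩
    have := (LD_mul σ 1 (σ⁻¹ * τ)).mpr h
    simpa using this
  · intro a _ b _ h
    exact mul_left_cancel h

lemma greedy (V : Finset (Equiv.Perm (Fin n))) :
    ∃ S : Finset (Equiv.Perm (Fin n)), S ⊆ V ∧
      (∀ σ ∈ S, ∀ τ ∈ S, σ ≠ τ → LocallyDisjoint σ τ) ∧ V.card ≤ 5 ^ n * S.card := by
  induction V using Finset.strongInduction with
  | _ V ih =>
    rcases V.eq_empty_or_nonempty with rfl | ⟨σ, hσ⟩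
    · exact ⟨∅, by simp⟩
    · set V' := V.filter (fun τ => LocallyDisjoint σ τ) with hV'
      have hσV' : σ ∉ V' := fun h => LD_irrefl σ (Finset.mem_filter.mp h).2
      have hsub : V' ⊂ V :=
        Finset.ssubset_iff_of_subset (Finset.filter_subset _ _) |>.mpr ⟨σ, hσ, hσV'⟩
      obtain ⟨S', hS'sub, hS'pair, hS'card⟩ := ih V' hsub
      have hσS' : σ ∉ S' := fun h => hσV' (hS'sub h)
      refine ⟨insert σ S', ?_, ?_, ?_⟩
      · intro x hx
        rcases Finset.mem_insert.mp hx with rfl | hx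
        · exact hσ
        · exact Finset.filter_subset _ _ (hS'sub hx)
      · intro a ha b hb hne
        have key : ∀ x ∈ S', LocallyDisjoint σ x :=
          fun x hx => (Finset.mem_filter.mp (hS'sub hx)).2
        rcases Finset.mem_insert.mp ha with rfl | ha2 <;>
          rcases Finset.mem_insert.mp hb with rfl | hb2
        · exact absurd rfl hne
        · exact key b hb2
        · exact LD_symm (key a ha2)
        · exact hS'pair a ha2 b hb2 hne
      · have hsplit : V'.card + (V.filter (fun τ => ¬ LocallyDisjoint σ τ)).card = V.card :=
          Finset.card_filter_add_card_filter_not _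
        have hnb := card_nbhd σ V
        rw [Finset.card_insert_of_notMem hσS', Nat.mul_add, Nat.mul_one]
        omega

theorem main (n : ℕ) :
    ∃ S : Finset (Equiv.Perm (Fin n)),
      (∀ σ ∈ S, ∀ τ ∈ S, σ ≠ τ → LocallyDisjoint σ τ) ∧
      Nat.factorial n ≤ 5 ^ n * S.card := by
  obtain ⟨S, _, hpair, hcard⟩ := greedy (Finset.univ : Finset (Equiv.Perm (Fin n)))
  refine ⟨S, hpair, ?_⟩
  rwa [Finset.card_univ, Fintype.card_perm, Fintype.card_fin] at hcard

end LDAux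

/-- There is a set of pairwise locally disjoint permutations of `[n]` of size at
least `n! / 5 ^ n`. -/
theorem exists_pairwise_locallyDisjoint (n : ℕ) (hn : 0 < n) :
    ∃ S : Finset (Equiv.Perm (Fin n)),
      (∀ σ ∈ S, ∀ τ ∈ S, σ ≠ τ → LocallyDisjoint σ τ) ∧
      Nat.factorial n ≤ 5 ^ n * S.card := by
  exact LDAux.main n
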